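/- Let W, W' be types, N : W → W' → Prop, and γ(X) = {z ∈ W | ∀ y : W', (∀ x ∈ X, N x y) → N z y} for X ⊆ W. Let ⋏ : W → W → Set W be a ternary relation lifted to sets by X ⋏ Y = ⋃ over x ∈ X, y ∈ Y of x ⋏ y, and suppose there exist operations ⇒ : W → W' → Set W' and ⇐ : W' → W → Set W' satisfying the distributive nuclear condition: for all x y : W, z : W', (∀ w ∈ x ⋏ y, N w z) ↔ (∀ u ∈ z ⇐ y, N x u) and (∀ w ∈ x ⋏ y, N w z) ↔ (∀ u ∈ x ⇒ z, N y u); suppose further that for all x, y ∈ W: γ(x ⋏ x) = γ({x}), γ(x ⋏ y) ⊆ γ({x}), and γ(x ⋏ y) = γ(y ⋏ x). Then γ(X ⋏ Y) = γ(X) ∩ γ(Y) for all X, Y ⊆ W. -/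
import Mathlib


/-- The Galois closure operator determined by a relation `N : W → W' → Prop`. -/
def galClose {W W' : Type*} (N : W → W' → Prop) (X : Set W) : Set W :=
  {z | ∀ y : W', (∀ x ∈ X, N x y) → N z y}

/-- Lifting of a ternary relation on `W` to an operation on subsets of `W`. -/
def liftRel {W : Type*} (meet : W → W → Set W) (X Y : Set W) : Set W :=
  ⋃ x ∈ X, ⋃ y ∈ Y, meet x y

/-- If the distributive nuclear condition holds, together with idempotence,
decrease and commutativity of `⋏` up to closure, then
`γ(X ⋏ Y) = γ(X) ∩ γ(Y)` for all subsets `X, Y` of `W`. -/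
theorem galClose_meet_eq_inter {W W' : Type*} (N : W → W' → Prop)
    (meet : W → W → Set W) (impr : W → W' → Set W') (impl : W' → W → Set W')
    (hnuc : ∀ (x y : W) (z : W'),
      ((∀ w ∈ meet x y, N w z) ↔ ∀ u ∈ impl z y, N x u) ∧
      ((∀ w ∈ meet x y, N w z) ↔ ∀ u ∈ impr x z, N y u))
    (hidem : ∀ x : W, galClose N (meet x x) = galClose N {x})
    (hle : ∀ x y : W, galClose N (meet x y) ⊆ galClose N {x})
    (hcomm : ∀ x y : W, galClose N (meet x y) = galClose N (meet y x)) :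
    ∀ X Y : Set W,
      galClose N (liftRel meet X Y) = galClose N X ∩ galClose N Y := by
  intro X Y
  apply Set.Subset.antisymm
  · intro z hz
    constructor
    · intro u hu
      apply hz u
      intro w hw
      simp only [liftRel, Set.mem_iUnion] at hw
      obtain ⟨x, hx, y, hy, hw⟩ := hw
      have hwg : w ∈ galClose N {x} := hle x y (fun v hv => hv w hw)
      exact hwg u (fun x' hx' => Set.mem_singleton_iff.mp hx' ▸ hu x hx)
    · intro u hu
      apply hz u
      intro w hw
      simp only [liftRel, Set.mem_iUnion] at hw
      obtain ⟨x, hx, y, hy, hw⟩ := hw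
      have hwg : w ∈ galClose N (meet y x) := by
        rw [← hcomm x y]; exact fun v hv => hv w hw
      have hwg' : w ∈ galClose N {y} := hle y x hwg
      exact hwg' u (fun y' hy' => Set.mem_singleton_iff.mp hy' ▸ hu y hy)
  · rintro z ⟨hzX, hzY⟩
    intro u hu
    -- Step 1: for all y ∈ Y, z ⋏ y ⊆ u^N
    have h1 : ∀ y ∈ Y, ∀ w ∈ meet z y, N w u := by
      intro y hy
      rw [(hnuc z y u).1]
      intro v hv
      apply hzX
      intro x hx
      exact ((hnuc x y u).1.mp
        (fun w hw => hu w (by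
          simp only [liftRel, Set.mem_iUnion]; exact ⟨x, hx, y, hy, hw⟩))) v hv
    -- Step 2: z ⋏ z ⊆ u^N
    have h2 : ∀ w ∈ meet z z, N w u := by
      rw [(hnuc z z u).2]
      intro v hv
      apply hzY
      intro y hy
      exact ((hnuc z y u).2.mp (h1 y hy)) v hv
    -- Conclude via idempotence: z ∈ γ{z} = γ(z ⋏ z)
    have hz' : z ∈ galClose N (meet z z) := by
      rw [hidem z]
      exact fun v hv => hv z rfl
    exact hz' u h2
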